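/- arXiv:math/0503203 — 4 statements merged into one kernel-verified Lean document; each statement's English description precedes it below -/
import Mathlib

section
/- Let e = uv be an edge of G, and set J = (uv) and K = I(G∖e) in R. Let H = G∖(N(u)∪N(v)) (note that u ∈ N(v) and v ∈ N(u), so u and v are among the deleted vertices). Then J ∩ K = (uv)·(P + I(H)), where P is the ideal of R generated by the variables in (N(u)∪N(v))∖{u,v}; equivalently, (uv) ∩ I(G∖e) is the ideal generated by the monomials uvw for w ∈ (N(u)∪N(v))∖{u,v} together with the monomials uv·x_i x_j for all edges {x_i,x_j} of H. -/
open MvPolynomial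

variable {V : Type*}

/-- The graph obtained from `G` by deleting the vertices in `S`
(and all edges incident to them). -/
def delVerts (G : SimpleGraph V) (S : Set V) : SimpleGraph V where
  Adj x y := G.Adj x y ∧ x ∉ S ∧ y ∉ S
  symm := ⟨fun _ _ h => ⟨h.1.symm, h.2.2, h.2.1⟩⟩
  loopless := ⟨fun _ h => G.irrefl h.1⟩

/-- The edge ideal of a simple graph `G`, generated by the monomials
`X x * X y` over the edges of `G`. -/
noncomputable def edgeIdeal (k : Type*) [Field k] (G : SimpleGraph V) :
    Ideal (MvPolynomial V k) :=
  Ideal.span {m | ∃ x y, G.Adj x y ∧ m = X x * X y}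

section Aux
set_option linter.unusedSectionVars false

variable [DecidableEq V]

private lemma XmulX (k : Type*) [Field k] (x y : V) :
    (X x * X y : MvPolynomial V k) = monomial (Finsupp.single x 1 + Finsupp.single y 1) 1 := by
  rw [X, X, monomial_mul, one_mul]

private lemma add_le_of_disj {f g d : V →₀ ℕ} (hf : f ≤ d) (hg : g ≤ d)
    (h : ∀ c, f c = 0 ∨ g c = 0) : f + g ≤ d := by
  intro c
  rcases h c with h | h
  · simpa [h] using hg c
  · simpa [h] using hf c

private lemma pair_apply_eq_zero {x y c : V} (hx : c ≠ x) (hy : c ≠ y) :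
    (Finsupp.single x 1 + Finsupp.single y 1 : V →₀ ℕ) c = 0 := by
  simp [Finsupp.single_apply, Ne.symm hx, Ne.symm hy]

private lemma one_le_of_pair_left {x y : V} {d : V →₀ ℕ} (hxy : x ≠ y)
    (h : Finsupp.single x 1 + Finsupp.single y 1 ≤ d) : 1 ≤ d x := by
  have := h x
  simpa [Finsupp.single_apply, hxy.symm] using this

private lemma one_le_of_pair_right {x y : V} {d : V →₀ ℕ} (hxy : x ≠ y)
    (h : Finsupp.single x 1 + Finsupp.single y 1 ≤ d) : 1 ≤ d y := by
  have := h y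
  simpa [Finsupp.single_apply, hxy] using this

/-- The key combinatorial lemma on exponent vectors. -/
private lemma key (G : SimpleGraph V) (u v : V) (huv : G.Adj u v) (d : V →₀ ℕ) :
    ((Finsupp.single u 1 + Finsupp.single v 1 ≤ d) ∧
      ∃ a b, (G.deleteEdges {s(u, v)}).Adj a b ∧
        Finsupp.single a 1 + Finsupp.single b 1 ≤ d) ↔
    ((∃ w ∈ (G.neighborSet u ∪ G.neighborSet v) \ {u, v},
        Finsupp.single u 1 + Finsupp.single v 1 + Finsupp.single w 1 ≤ d) ∨
      ∃ a b, (delVerts G (G.neighborSet u ∪ G.neighborSet v)).Adj a b ∧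
        Finsupp.single u 1 + Finsupp.single v 1 +
          (Finsupp.single a 1 + Finsupp.single b 1) ≤ d) := by
  have hune : u ≠ v := huv.ne
  constructor
  · rintro ⟨huvd, a, b, hab, habd⟩
    rw [SimpleGraph.deleteEdges_adj, Set.mem_singleton_iff, Sym2.eq_iff] at hab
    obtain ⟨hGab, hne⟩ := hab
    have hane : a ≠ b := hGab.ne
    have hda : 1 ≤ d a := one_le_of_pair_left hane habd
    have hdb : 1 ≤ d b := one_le_of_pair_right hane habd
    -- helper to conclude the left disjunct
    have mkLeft : ∀ w, w ∈ (G.neighborSet u ∪ G.neighborSet v) → w ≠ u → w ≠ v → 1 ≤ d w →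
        (∃ w ∈ (G.neighborSet u ∪ G.neighborSet v) \ {u, v},
          Finsupp.single u 1 + Finsupp.single v 1 + Finsupp.single w 1 ≤ d) := by
      intro w hwS hwu hwv hdw
      refine ⟨w, ⟨hwS, by simp [hwu, hwv]⟩, ?_⟩
      refine add_le_of_disj huvd (Finsupp.single_le_iff.mpr hdw) ?_
      intro c
      by_cases hc : c = w
      · subst hc; exact Or.inl (pair_apply_eq_zero hwu hwv)
      · exact Or.inr (by simp [Finsupp.single_apply, Ne.symm hc])
    by_cases hau : a = u
    · subst hau
      have hbv : b ≠ v := by rintro rfl; exact hne (Or.inl ⟨rfl, rfl⟩)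
      exact Or.inl (mkLeft b (Or.inl hGab) (Ne.symm hane) hbv hdb)
    by_cases hav : a = v
    · subst hav
      have hbu : b ≠ u := by rintro rfl; exact hne (Or.inr ⟨rfl, rfl⟩)
      exact Or.inl (mkLeft b (Or.inr hGab) hbu (Ne.symm hane) hdb)
    by_cases hbu : b = u
    · subst hbu
      exact Or.inl (mkLeft a (Or.inl hGab.symm) hau hav hda)
    by_cases hbv : b = v
    · subst hbv
      exact Or.inl (mkLeft a (Or.inr hGab.symm) hau hav hda)
    by_cases haS : a ∈ (G.neighborSet u ∪ G.neighborSet v)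
    · exact Or.inl (mkLeft a haS hau hav hda)
    by_cases hbS : b ∈ (G.neighborSet u ∪ G.neighborSet v)
    · exact Or.inl (mkLeft b hbS hbu hbv hdb)
    refine Or.inr ⟨a, b, ⟨hGab, haS, hbS⟩, ?_⟩
    refine add_le_of_disj huvd habd ?_
    intro c
    by_cases hca : c = a
    · subst hca; exact Or.inl (pair_apply_eq_zero hau hav)
    by_cases hcb : c = b
    · subst hcb; exact Or.inl (pair_apply_eq_zero hbu hbv)
    · exact Or.inr (pair_apply_eq_zero hca hcb)
  · rintro (⟨w, ⟨hwS, hwuv⟩, hle⟩ | ⟨a, b, ⟨hGab, haS, hbS⟩, hle⟩)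
    · have hwu : w ≠ u := by intro h; exact hwuv (by simp [h])
      have hwv : w ≠ v := by intro h; exact hwuv (by simp [h])
      have huvd : Finsupp.single u 1 + Finsupp.single v 1 ≤ d :=
        le_trans (self_le_add_right _ _) hle
      refine ⟨huvd, ?_⟩
      rcases hwS with hw | hw
      · refine ⟨u, w, ?_, ?_⟩
        · rw [SimpleGraph.deleteEdges_adj, Set.mem_singleton_iff, Sym2.eq_iff]
          exact ⟨hw, by rintro (⟨-, rfl⟩ | ⟨rfl, -⟩) <;> simp_all⟩
        · refine le_trans ?_ hle
          rw [add_right_comm]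
          exact self_le_add_right _ _
      · refine ⟨v, w, ?_, ?_⟩
        · rw [SimpleGraph.deleteEdges_adj, Set.mem_singleton_iff, Sym2.eq_iff]
          exact ⟨hw, by rintro (⟨rfl, -⟩ | ⟨-, rfl⟩) <;> simp_all⟩
        · refine le_trans ?_ hle
          rw [add_assoc]
          exact le_add_self
    · have huvd : Finsupp.single u 1 + Finsupp.single v 1 ≤ d :=
        le_trans (self_le_add_right _ _) hle
      refine ⟨huvd, a, b, ?_, le_trans (le_add_self) hle⟩
      rw [SimpleGraph.deleteEdges_adj, Set.mem_singleton_iff, Sym2.eq_iff]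
      refine ⟨hGab, ?_⟩
      rintro (⟨rfl, rfl⟩ | ⟨rfl, rfl⟩) <;>
        simp_all [SimpleGraph.mem_neighborSet]


private lemma XXX (k : Type*) [Field k] (u v w : V) :
    (X u * X v * X w : MvPolynomial V k) =
      monomial (Finsupp.single u 1 + Finsupp.single v 1 + Finsupp.single w 1) 1 := by
  rw [XmulX, X, monomial_mul, one_mul]

private lemma XXXX (k : Type*) [Field k] (u v x y : V) :
    (X u * X v * (X x * X y) : MvPolynomial V k) =
      monomial (Finsupp.single u 1 + Finsupp.single v 1 +
        (Finsupp.single x 1 + Finsupp.single y 1)) 1 := by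
  rw [XmulX, XmulX, monomial_mul, one_mul]

private lemma edgeSet_eq (k : Type*) [Field k] (G' : SimpleGraph V) :
    {m : MvPolynomial V k | ∃ x y, G'.Adj x y ∧ m = X x * X y} =
      (fun s => monomial s (1 : k)) ''
        {d | ∃ x y, G'.Adj x y ∧ d = Finsupp.single x 1 + Finsupp.single y 1} := by
  ext m
  simp only [Set.mem_image, Set.mem_setOf_eq]
  constructor
  · rintro ⟨x, y, h, rfl⟩
    exact ⟨_, ⟨x, y, h, rfl⟩, (XmulX k x y).symm⟩
  · rintro ⟨d, ⟨x, y, h, rfl⟩, rfl⟩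
    exact ⟨x, y, h, (XmulX k x y).symm⟩

/-- The main identity: statement 2. -/
private lemma main (k : Type*) [Field k] (G : SimpleGraph V) (u v : V) (huv : G.Adj u v) :
    (Ideal.span {(X u * X v : MvPolynomial V k)} ⊓
        edgeIdeal k (G.deleteEdges {s(u, v)}) =
      Ideal.span
        ({m | ∃ w ∈ (G.neighborSet u ∪ G.neighborSet v) \ {u, v},
            m = (X u * X v * X w : MvPolynomial V k)} ∪
         {m | ∃ x y, (delVerts G (G.neighborSet u ∪ G.neighborSet v)).Adj x y ∧
            m = (X u * X v * (X x * X y) : MvPolynomial V k)})) := by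
  have hset2 :
      ({m | ∃ w ∈ (G.neighborSet u ∪ G.neighborSet v) \ {u, v},
          m = (X u * X v * X w : MvPolynomial V k)} ∪
       {m | ∃ x y, (delVerts G (G.neighborSet u ∪ G.neighborSet v)).Adj x y ∧
          m = (X u * X v * (X x * X y) : MvPolynomial V k)}) =
      (fun s => monomial s (1 : k)) ''
        ({d | ∃ w ∈ (G.neighborSet u ∪ G.neighborSet v) \ {u, v},
            d = Finsupp.single u 1 + Finsupp.single v 1 + Finsupp.single w 1} ∪
         {d | ∃ x y, (delVerts G (G.neighborSet u ∪ G.neighborSet v)).Adj x y ∧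
            d = Finsupp.single u 1 + Finsupp.single v 1 +
              (Finsupp.single x 1 + Finsupp.single y 1)}) := by
    rw [Set.image_union]
    congr 1
    · ext m
      simp only [Set.mem_image, Set.mem_setOf_eq]
      constructor
      · rintro ⟨w, hw, rfl⟩
        exact ⟨_, ⟨w, hw, rfl⟩, (XXX k u v w).symm⟩
      · rintro ⟨d, ⟨w, hw, rfl⟩, rfl⟩
        exact ⟨w, hw, (XXX k u v w).symm⟩
    · ext m
      simp only [Set.mem_image, Set.mem_setOf_eq]
      constructor
      · rintro ⟨x, y, h, rfl⟩
        exact ⟨_, ⟨x, y, h, rfl⟩, (XXXX k u v x y).symm⟩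
      · rintro ⟨d, ⟨x, y, h, rfl⟩, rfl⟩
        exact ⟨x, y, h, (XXXX k u v x y).symm⟩
  have hset1 : ({(X u * X v : MvPolynomial V k)} : Set (MvPolynomial V k)) =
      (fun s => monomial s (1 : k)) '' {Finsupp.single u 1 + Finsupp.single v 1} := by
    rw [Set.image_singleton, XmulX]
  ext p
  rw [Submodule.mem_inf, edgeIdeal, edgeSet_eq, hset1, hset2,
    mem_ideal_span_monomial_image, mem_ideal_span_monomial_image,
    mem_ideal_span_monomial_image]
  constructor
  · rintro ⟨h1, h2⟩ d hd
    obtain ⟨s1, hs1, hle1⟩ := h1 d hd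
    rw [Set.mem_singleton_iff] at hs1
    subst hs1
    obtain ⟨s2, ⟨a, b, hab, rfl⟩, hle2⟩ := h2 d hd
    rcases (key G u v huv d).mp ⟨hle1, a, b, hab, hle2⟩ with
      ⟨w, hw, hle⟩ | ⟨x, y, hxy, hle⟩
    · exact ⟨_, Or.inl ⟨w, hw, rfl⟩, hle⟩
    · exact ⟨_, Or.inr ⟨x, y, hxy, rfl⟩, hle⟩
  · intro h
    constructor <;> intro d hd <;>
      obtain ⟨s, hs, hle⟩ := h d hd
    · refine ⟨_, rfl, ?_⟩
      rcases hs with ⟨w, hw, rfl⟩ | ⟨x, y, hxy, rfl⟩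
      · exact ((key G u v huv d).mpr (Or.inl ⟨w, hw, hle⟩)).1
      · exact ((key G u v huv d).mpr (Or.inr ⟨x, y, hxy, hle⟩)).1
    · rcases hs with ⟨w, hw, rfl⟩ | ⟨x, y, hxy, rfl⟩
      · obtain ⟨-, a, b, hab, hle'⟩ := (key G u v huv d).mpr (Or.inl ⟨w, hw, hle⟩)
        exact ⟨_, ⟨a, b, hab, rfl⟩, hle'⟩
      · obtain ⟨-, a, b, hab, hle'⟩ := (key G u v huv d).mpr (Or.inr ⟨x, y, hxy, hle⟩)
        exact ⟨_, ⟨a, b, hab, rfl⟩, hle'⟩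


private lemma rhs1_eq (k : Type*) [Field k] (G : SimpleGraph V) (u v : V) :
    (Ideal.span {(X u * X v : MvPolynomial V k)} *
        (Ideal.span ((fun w => (X w : MvPolynomial V k)) ''
            ((G.neighborSet u ∪ G.neighborSet v) \ {u, v})) +
          edgeIdeal k (delVerts G (G.neighborSet u ∪ G.neighborSet v)))) =
      Ideal.span
        ({m | ∃ w ∈ (G.neighborSet u ∪ G.neighborSet v) \ {u, v},
            m = (X u * X v * X w : MvPolynomial V k)} ∪
         {m | ∃ x y, (delVerts G (G.neighborSet u ∪ G.neighborSet v)).Adj x y ∧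
            m = (X u * X v * (X x * X y) : MvPolynomial V k)}) := by
  rw [mul_add, edgeIdeal, Ideal.span_mul_span', Ideal.span_mul_span',
    Set.singleton_mul, Set.singleton_mul, Ideal.span_union, Submodule.add_eq_sup]
  congr 1
  · congr 1
    rw [Set.image_image]
    ext m
    simp only [Set.mem_image, Set.mem_setOf_eq]
    constructor
    · rintro ⟨w, hw, rfl⟩; exact ⟨w, hw, rfl⟩
    · rintro ⟨w, hw, rfl⟩; exact ⟨w, hw, rfl⟩
  · congr 1
    ext m
    simp only [Set.mem_image, Set.mem_setOf_eq]
    constructor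
    · rintro ⟨n, ⟨x, y, h, rfl⟩, rfl⟩; exact ⟨x, y, h, rfl⟩
    · rintro ⟨x, y, h, rfl⟩; exact ⟨_, ⟨x, y, h, rfl⟩, rfl⟩

end Aux

/-- if `e = uv` is an edge of `G`, `J = (uv)`, `K = I(G \ e)`,
and `H = G \ (N(u) ∪ N(v))`, then `J ∩ K = (uv) * (P + I(H))` where `P` is
generated by the variables in `(N(u) ∪ N(v)) \ {u, v}`; equivalently,
`J ∩ K` is generated by the monomials `uvw` for `w ∈ (N(u) ∪ N(v)) \ {u, v}`
together with the monomials `uv * x * y` over the edges `xy` of `H`. -/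
theorem stmt0 (k : Type*) [Field k] [Fintype V] [DecidableEq V]
    (G : SimpleGraph V) (u v : V) (huv : G.Adj u v) :
    (Ideal.span {(X u * X v : MvPolynomial V k)} ⊓
        edgeIdeal k (G.deleteEdges {s(u, v)}) =
      Ideal.span {(X u * X v : MvPolynomial V k)} *
        (Ideal.span ((fun w => (X w : MvPolynomial V k)) ''
            ((G.neighborSet u ∪ G.neighborSet v) \ {u, v})) +
          edgeIdeal k (delVerts G (G.neighborSet u ∪ G.neighborSet v)))) ∧
    (Ideal.span {(X u * X v : MvPolynomial V k)} ⊓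
        edgeIdeal k (G.deleteEdges {s(u, v)}) =
      Ideal.span
        ({m | ∃ w ∈ (G.neighborSet u ∪ G.neighborSet v) \ {u, v},
            m = (X u * X v * X w : MvPolynomial V k)} ∪
         {m | ∃ x y, (delVerts G (G.neighborSet u ∪ G.neighborSet v)).Adj x y ∧
            m = (X u * X v * (X x * X y) : MvPolynomial V k)})) :=
  ⟨(main k G u v huv).trans (rhs1_eq k G u v).symm, main k G u v huv⟩
end

section
/- Suppose G has at least two edges (so that I(G∖e) ≠ (0) for every edge e of G). An edge e = uv of G is a splitting edge of G if and only if N(u) ⊆ N(v)∪{v} or N(v) ⊆ N(u)∪{u}. -/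
open MvPolynomial

variable {V : Type*}

/-- A (monic) monomial in a multivariate polynomial ring. -/
def IsMonomial {k : Type*} [Field k] (m : MvPolynomial V k) : Prop :=
  ∃ s : V →₀ ℕ, m = monomial s 1

/-- A monomial ideal: an ideal generated by a set of (monic) monomials. -/
def IsMonomialIdeal {k : Type*} [Field k] (I : Ideal (MvPolynomial V k)) : Prop :=
  ∃ S : Set (MvPolynomial V k), (∀ m ∈ S, IsMonomial m) ∧ I = Ideal.span S

/-- The set of minimal (monic) monomial generators of a monomial ideal `I`:
monomials `m ∈ I` such that no proper monomial divisor of `m` lies in `I`. -/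
def minGens {k : Type*} [Field k] (I : Ideal (MvPolynomial V k)) :
    Set (MvPolynomial V k) :=
  {m | IsMonomial m ∧ m ∈ I ∧
    ∀ m' : MvPolynomial V k, IsMonomial m' → m' ∣ m → m' ≠ m → m' ∉ I}

/-- `L` is the (monic) least common multiple of the set of monomials `S`. -/
def IsLcmOf {k : Type*} [Field k] (S : Set (MvPolynomial V k))
    (L : MvPolynomial V k) : Prop :=
  IsMonomial L ∧ (∀ m ∈ S, m ∣ L) ∧
    ∀ L' : MvPolynomial V k, IsMonomial L' → (∀ m ∈ S, m ∣ L') → L ∣ L'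

/-- Eliahou–Kervaire splitting: `I = J + K` is a splitting of `I` if `J` and `K`
are nonzero monomial ideals with `I = J + K`, `G(I)` is the disjoint union of
`G(J)` and `G(K)`, and there is a splitting function `w ↦ (φ w, ψ w)` with
`w = lcm(φ w, ψ w)` for every `w ∈ G(J ∩ K)` and, for every nonempty
`S ⊆ G(J ∩ K)`, both `lcm(φ S)` and `lcm(ψ S)` strictly divide `lcm S`. -/
def IsSplitting {k : Type*} [Field k] (I J K : Ideal (MvPolynomial V k)) : Prop :=
  IsMonomialIdeal J ∧ IsMonomialIdeal K ∧ J ≠ ⊥ ∧ K ≠ ⊥ ∧ I = J + K ∧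
  minGens I = minGens J ∪ minGens K ∧ Disjoint (minGens J) (minGens K) ∧
  ∃ φ ψ : MvPolynomial V k → MvPolynomial V k,
    (∀ w ∈ minGens (J ⊓ K), φ w ∈ minGens J ∧ ψ w ∈ minGens K ∧
        IsLcmOf {φ w, ψ w} w) ∧
    (∀ S ⊆ minGens (J ⊓ K), S.Nonempty →
      ∀ L Lφ Lψ : MvPolynomial V k, IsLcmOf S L → IsLcmOf (φ '' S) Lφ →
        IsLcmOf (ψ '' S) Lψ → (Lφ ∣ L ∧ Lφ ≠ L) ∧ (Lψ ∣ L ∧ Lψ ≠ L))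

set_option linter.unusedSectionVars false
set_option linter.unusedVariables false

section Aux

variable [DecidableEq V] {k : Type*} [Field k]

noncomputable def pr (x y : V) : V →₀ ℕ := Finsupp.single x 1 + Finsupp.single y 1

lemma pr_apply (x y z : V) : pr x y z = (if x = z then 1 else 0) + (if y = z then 1 else 0) := by
  simp [pr, Finsupp.single_apply]

lemma pr_comm (x y : V) : pr x y = pr y x := add_comm _ _

lemma X_mul_X (x y : V) : (X x * X y : MvPolynomial V k) = monomial (pr x y) 1 := by
  rw [X, X, monomial_mul, mul_one]; rfl

lemma pr_le_iff {x y : V} (hxy : x ≠ y) {t : V →₀ ℕ} :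
    pr x y ≤ t ↔ 1 ≤ t x ∧ 1 ≤ t y := by
  constructor
  · intro h
    have hx := h x; have hy := h y
    rw [pr_apply] at hx hy
    simp at hx hy
    constructor <;> omega
  · rintro ⟨h1, h2⟩ z
    rw [pr_apply]
    split_ifs with ha hb hb
    · exact absurd (ha.trans hb.symm) hxy
    · subst ha; omega
    · subst hb; omega
    · omega

lemma mdvd {s t : V →₀ ℕ} : (monomial s 1 : MvPolynomial V k) ∣ monomial t 1 ↔ s ≤ t := by
  rw [monomial_dvd_monomial]; simp

lemma mono_inj {s t : V →₀ ℕ} (h : (monomial s (1:k)) = monomial t 1) : s = t :=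
  MvPolynomial.monomial_left_injective (one_ne_zero (α := k)) h

lemma pr_le_pr {x' y' x y : V} (h' : x' ≠ y') (h : x ≠ y) (hle : pr x' y' ≤ pr x y) :
    pr x' y' = pr x y := by
  rw [pr_le_iff h'] at hle
  obtain ⟨h1, h2⟩ := hle
  rw [pr_apply] at h1 h2
  have hx' : x' = x ∨ x' = y := by
    by_contra hc; push_neg at hc
    rw [if_neg (fun hh => hc.1 (hh.symm)), if_neg (fun hh => hc.2 (hh.symm))] at h1; omega
  have hy' : y' = x ∨ y' = y := by
    by_contra hc; push_neg at hc
    rw [if_neg (fun hh => hc.1 (hh.symm)), if_neg (fun hh => hc.2 (hh.symm))] at h2; omega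
  rcases hx' with rfl | rfl <;> rcases hy' with rfl | rfl
  · exact absurd rfl h'
  · rfl
  · exact pr_comm _ _
  · exact absurd rfl h'

lemma edgeIdeal_eq (G : SimpleGraph V) :
    edgeIdeal k G = Ideal.span ((fun s => monomial s (1:k)) ''
      {s | ∃ x y, G.Adj x y ∧ s = pr x y}) := by
  unfold edgeIdeal
  congr 1
  ext m
  constructor
  · rintro ⟨x, y, h, rfl⟩
    exact ⟨pr x y, ⟨x, y, h, rfl⟩, (X_mul_X x y).symm⟩
  · rintro ⟨s, ⟨x, y, h, rfl⟩, rfl⟩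
    exact ⟨x, y, h, (X_mul_X x y).symm⟩

lemma mem_edgeIdeal {G : SimpleGraph V} {t : V →₀ ℕ} :
    (monomial t 1 : MvPolynomial V k) ∈ edgeIdeal k G ↔
      ∃ x y, G.Adj x y ∧ 1 ≤ t x ∧ 1 ≤ t y := by
  classical
  rw [edgeIdeal_eq, mem_ideal_span_monomial_image]
  rw [support_monomial, if_neg (one_ne_zero)]
  constructor
  · intro h
    obtain ⟨s, ⟨x, y, hadj, rfl⟩, hle⟩ := h t (Finset.mem_singleton_self t)
    exact ⟨x, y, hadj, (pr_le_iff hadj.ne).mp hle⟩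
  · rintro ⟨x, y, hadj, h1, h2⟩ ti hti
    rw [Finset.mem_singleton] at hti; subst hti
    exact ⟨pr x y, ⟨x, y, hadj, rfl⟩, (pr_le_iff hadj.ne).mpr ⟨h1, h2⟩⟩

lemma mem_J {u v : V} (huv : u ≠ v) {t : V →₀ ℕ} :
    (monomial t 1 : MvPolynomial V k) ∈ Ideal.span {(X u * X v : MvPolynomial V k)} ↔
      1 ≤ t u ∧ 1 ≤ t v := by
  rw [Ideal.mem_span_singleton, X_mul_X, mdvd, pr_le_iff huv]

lemma minGens_edgeIdeal (G : SimpleGraph V) :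
    minGens (edgeIdeal k G) = {m : MvPolynomial V k | ∃ x y, G.Adj x y ∧ m = X x * X y} := by
  ext m
  constructor
  · rintro ⟨⟨t, rfl⟩, hmem, hmin⟩
    obtain ⟨x, y, hadj, h1, h2⟩ := mem_edgeIdeal.mp hmem
    have hdvd : (monomial (pr x y) 1 : MvPolynomial V k) ∣ monomial t 1 :=
      mdvd.mpr ((pr_le_iff hadj.ne).mpr ⟨h1, h2⟩)
    have hin : (monomial (pr x y) 1 : MvPolynomial V k) ∈ edgeIdeal k G :=
      mem_edgeIdeal.mpr ⟨x, y, hadj, by rw [pr_apply]; simp, by rw [pr_apply]; simp [hadj.ne]⟩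
    by_cases he : (monomial (pr x y) 1 : MvPolynomial V k) = monomial t 1
    · exact ⟨x, y, hadj, by rw [X_mul_X, he]⟩
    · exact absurd hin (hmin _ ⟨_, rfl⟩ hdvd he)
  · rintro ⟨x, y, hadj, rfl⟩
    rw [X_mul_X]
    refine ⟨⟨_, rfl⟩, mem_edgeIdeal.mpr ⟨x, y, hadj, by rw [pr_apply]; simp,
      by rw [pr_apply]; simp [hadj.ne]⟩, ?_⟩
    rintro m' ⟨r, rfl⟩ hdvd hne hin
    obtain ⟨x', y', hadj', h1, h2⟩ := mem_edgeIdeal.mp hin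
    have hrle : r ≤ pr x y := mdvd.mp hdvd
    have : pr x' y' = pr x y :=
      pr_le_pr hadj'.ne hadj.ne (le_trans ((pr_le_iff hadj'.ne).mpr ⟨h1, h2⟩) hrle)
    have : r = pr x y := le_antisymm hrle (this ▸ (pr_le_iff hadj'.ne).mpr ⟨h1, h2⟩)
    exact hne (by rw [this])

lemma minGens_J {u v : V} (huv : u ≠ v) :
    minGens (Ideal.span {(X u * X v : MvPolynomial V k)}) = {X u * X v} := by
  ext m
  constructor
  · rintro ⟨⟨t, rfl⟩, hmem, hmin⟩
    have hle : pr u v ≤ t := (pr_le_iff huv).mpr ((mem_J huv).mp hmem)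
    have hdvd : (monomial (pr u v) 1 : MvPolynomial V k) ∣ monomial t 1 := mdvd.mpr hle
    have hin : (monomial (pr u v) 1 : MvPolynomial V k) ∈
        Ideal.span {(X u * X v : MvPolynomial V k)} := by
      rw [X_mul_X]; exact Ideal.mem_span_singleton_self _
    by_cases he : (monomial (pr u v) 1 : MvPolynomial V k) = monomial t 1
    · rw [Set.mem_singleton_iff, X_mul_X, he]
    · exact absurd hin (hmin _ ⟨_, rfl⟩ hdvd he)
  · rintro rfl
    rw [X_mul_X]
    refine ⟨⟨_, rfl⟩, by rw [← X_mul_X]; exact Ideal.mem_span_singleton_self _, ?_⟩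
    rintro m' ⟨r, rfl⟩ hdvd hne hin
    rw [← X_mul_X] at hin
    have h1 : pr u v ≤ r := (pr_le_iff huv).mpr ((mem_J huv).mp hin)
    have h2 : r ≤ pr u v := mdvd.mp hdvd
    exact hne (by rw [le_antisymm h2 h1])

lemma pr_x {x y : V} (h : x ≠ y) : pr x y x = 1 := by
  rw [pr_apply]; simp [h.symm]

lemma pr_y {x y : V} (h : x ≠ y) : pr x y y = 1 := by
  rw [pr_apply]; simp [h]

lemma pr_o {x y z : V} (hx : x ≠ z) (hy : y ≠ z) : pr x y z = 0 := by
  rw [pr_apply]; simp [hx, hy]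

lemma isLcm_pair (s r : V →₀ ℕ) :
    IsLcmOf {(monomial s 1 : MvPolynomial V k), monomial r 1} (monomial (s ⊔ r) 1) := by
  refine ⟨⟨_, rfl⟩, ?_, ?_⟩
  · rintro m (rfl | rfl)
    · exact mdvd.mpr le_sup_left
    · exact mdvd.mpr le_sup_right
  · rintro L' ⟨t', rfl⟩ h
    exact mdvd.mpr (sup_le (mdvd.mp (h _ (Set.mem_insert _ _)))
      (mdvd.mp (h _ (Set.mem_insert_of_mem _ rfl))))

lemma isLcm_single (s : V →₀ ℕ) :
    IsLcmOf {(monomial s 1 : MvPolynomial V k)} (monomial s 1) :=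
  ⟨⟨_, rfl⟩, fun m hm => by rw [hm], fun L' _ h => h _ rfl⟩

lemma lcm_unique {S : Set (MvPolynomial V k)} {L L' : MvPolynomial V k}
    (h : IsLcmOf S L) (h' : IsLcmOf S L') : L = L' := by
  obtain ⟨⟨t, rfl⟩, h1, h2⟩ := h
  obtain ⟨⟨t', rfl⟩, h1', h2'⟩ := h'
  have d1 := mdvd.mp (h2 _ ⟨t', rfl⟩ h1')
  have d2 := mdvd.mp (h2' _ ⟨t, rfl⟩ h1)
  rw [le_antisymm d1 d2]

lemma pr_eq_sym2 {x y a b : V} (hxy : x ≠ y) (hab : a ≠ b) (h : pr x y = pr a b) :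
    s(x, y) = s(a, b) := by
  have hx : 1 ≤ pr a b x := by rw [← h, pr_x hxy]
  have hy : 1 ≤ pr a b y := by rw [← h, pr_y hxy]
  rw [pr_apply] at hx hy
  have hx' : x = a ∨ x = b := by
    by_contra hc; push_neg at hc
    rw [if_neg (fun hh => hc.1 hh.symm), if_neg (fun hh => hc.2 hh.symm)] at hx; omega
  have hy' : y = a ∨ y = b := by
    by_contra hc; push_neg at hc
    rw [if_neg (fun hh => hc.1 hh.symm), if_neg (fun hh => hc.2 hh.symm)] at hy; omega
  rcases hx' with rfl | rfl <;> rcases hy' with rfl | rfl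
  · exact absurd rfl hxy
  · rfl
  · exact Sym2.eq_swap
  · exact absurd rfl hxy

lemma minGens_inf_shape {G : SimpleGraph V} {u v : V} (huv : G.Adj u v)
    {w : MvPolynomial V k}
    (hw : w ∈ minGens ((Ideal.span {(X u * X v : MvPolynomial V k)}) ⊓
      edgeIdeal k (G.deleteEdges {s(u, v)}))) :
    ∃ x y, (G.deleteEdges {s(u, v)}).Adj x y ∧ w = monomial (pr u v ⊔ pr x y) 1 := by
  obtain ⟨⟨t, rfl⟩, hmem, hmin⟩ := hw
  rw [Submodule.mem_inf] at hmem
  obtain ⟨hJ, hK⟩ := hmem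
  have hle : pr u v ≤ t := (pr_le_iff huv.ne).mpr ((mem_J huv.ne).mp hJ)
  obtain ⟨x, y, hadj, h1, h2⟩ := mem_edgeIdeal.mp hK
  have hle2 : pr x y ≤ t := (pr_le_iff hadj.ne).mpr ⟨h1, h2⟩
  refine ⟨x, y, hadj, ?_⟩
  set r := pr u v ⊔ pr x y with hr
  have hrt : r ≤ t := sup_le hle hle2
  have hrin : (monomial r 1 : MvPolynomial V k) ∈
      (Ideal.span {(X u * X v : MvPolynomial V k)}) ⊓ edgeIdeal k (G.deleteEdges {s(u, v)}) := by
    rw [Submodule.mem_inf]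
    constructor
    · exact (mem_J huv.ne).mpr ((pr_le_iff huv.ne).mp le_sup_left)
    · exact mem_edgeIdeal.mpr ⟨x, y, hadj, ((pr_le_iff hadj.ne).mp le_sup_right).1,
        ((pr_le_iff hadj.ne).mp le_sup_right).2⟩
  by_cases he : (monomial r 1 : MvPolynomial V k) = monomial t 1
  · rw [← he]
  · exact absurd hrin (hmin _ ⟨_, rfl⟩ (mdvd.mpr hrt) he)

lemma sup_helper {u v y : V} (huv : u ≠ v) (hyu : y ≠ u) (hyv : y ≠ v) :
    pr u v ⊔ pr v y = pr u v ⊔ pr u y := by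
  ext z
  rw [Finsupp.sup_apply, Finsupp.sup_apply, pr_apply, pr_apply, pr_apply]
  split_ifs <;> first | omega | simp_all

lemma exists_edge_del {G : SimpleGraph V} {u v : V}
    (htwo : ∃ e f : Sym2 V, e ∈ G.edgeSet ∧ f ∈ G.edgeSet ∧ e ≠ f) :
    ∃ x y, (G.deleteEdges {s(u, v)}).Adj x y := by
  obtain ⟨e, f, he, hf, hef⟩ := htwo
  have hex : ∃ g ∈ G.edgeSet, g ≠ s(u, v) := by
    by_cases h : e = s(u, v)
    · exact ⟨f, hf, fun hh => hef (h.trans hh.symm)⟩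
    · exact ⟨e, he, h⟩
  obtain ⟨g, hg, hgne⟩ := hex
  induction g using Sym2.ind with
  | _ x y => exact ⟨x, y, by rw [SimpleGraph.deleteEdges_adj]; exact ⟨hg, by simpa using hgne⟩⟩

lemma psi_exists {G : SimpleGraph V} {u v : V} (huv : G.Adj u v)
    (hN : ∀ a, G.Adj u a → a = v ∨ G.Adj v a)
    {w : MvPolynomial V k}
    (hw : w ∈ minGens ((Ideal.span {(X u * X v : MvPolynomial V k)}) ⊓
      edgeIdeal k (G.deleteEdges {s(u, v)}))) :
    ∃ m, m ∈ minGens (edgeIdeal k (G.deleteEdges {s(u, v)})) ∧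
      IsLcmOf {(X u * X v : MvPolynomial V k), m} w ∧
      ∃ x y, x ≠ u ∧ y ≠ u ∧ m = monomial (pr x y) 1 := by
  obtain ⟨x, y, hadj, rfl⟩ := minGens_inf_shape huv hw
  have hG : G.Adj x y := (SimpleGraph.deleteEdges_adj.mp hadj).1
  have hsy : s(x, y) ≠ s(u, v) := by
    simpa using (SimpleGraph.deleteEdges_adj.mp hadj).2
  simp only [minGens_edgeIdeal]
  by_cases hx : x = u
  · have hx' := hx.symm; subst hx'
    have hyu : y ≠ u := hG.ne'
    have hyv : y ≠ v := by rintro rfl; exact hsy rfl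
    have hvy : G.Adj v y := (hN y hG).resolve_left hyv
    have hadj' : (G.deleteEdges {s(u, v)}).Adj v y := by
      rw [SimpleGraph.deleteEdges_adj]
      refine ⟨hvy, ?_⟩
      simp only [Set.mem_singleton_iff]
      intro h
      rw [Sym2.eq_iff] at h
      rcases h with ⟨h1, _⟩ | ⟨_, h2⟩
      · exact huv.ne' h1
      · exact hyu h2
    refine ⟨X v * X y, ⟨v, y, hadj', rfl⟩, ?_, v, y, huv.ne', hyu, X_mul_X v y⟩
    rw [X_mul_X, X_mul_X, ← sup_helper huv.ne hyu hyv]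
    exact isLcm_pair _ _
  · by_cases hy : y = u
    · have hy' := hy.symm; subst hy'
      have hxv : x ≠ v := by
        rintro rfl
        exact hsy Sym2.eq_swap
      have hvx : G.Adj v x := (hN x hG.symm).resolve_left hxv
      have hadj' : (G.deleteEdges {s(u, v)}).Adj v x := by
        rw [SimpleGraph.deleteEdges_adj]
        refine ⟨hvx, ?_⟩
        simp only [Set.mem_singleton_iff]
        intro h
        rw [Sym2.eq_iff] at h
        rcases h with ⟨h1, _⟩ | ⟨_, h2⟩
        · exact huv.ne' h1
        · exact hx h2
      refine ⟨X v * X x, ⟨v, x, hadj', rfl⟩, ?_, v, x, huv.ne', hx, X_mul_X v x⟩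
      rw [X_mul_X, X_mul_X, pr_comm x u, ← sup_helper huv.ne hx hxv]
      exact isLcm_pair _ _
    · refine ⟨X x * X y, ⟨x, y, hadj, rfl⟩, ?_, x, y, hx, hy, X_mul_X x y⟩
      rw [X_mul_X, X_mul_X]
      exact isLcm_pair _ _

lemma gen_sets_eq {G : SimpleGraph V} {u v : V} (huv : G.Adj u v) :
    {m : MvPolynomial V k | ∃ x y, G.Adj x y ∧ m = X x * X y} =
      {(X u * X v : MvPolynomial V k)} ∪
        {m : MvPolynomial V k | ∃ x y, (G.deleteEdges {s(u, v)}).Adj x y ∧ m = X x * X y} := by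
  ext m
  constructor
  · rintro ⟨x, y, hxy, rfl⟩
    by_cases h : s(x, y) = s(u, v)
    · left
      rw [Sym2.eq_iff] at h
      rcases h with ⟨rfl, rfl⟩ | ⟨rfl, rfl⟩
      · rfl
      · exact mul_comm _ _
    · right
      exact ⟨x, y, by rw [SimpleGraph.deleteEdges_adj]; exact ⟨hxy, by simpa using h⟩, rfl⟩
  · rintro (rfl | ⟨x, y, hxy, rfl⟩)
    · exact ⟨u, v, huv, rfl⟩
    · exact ⟨x, y, (SimpleGraph.deleteEdges_adj.mp hxy).1, rfl⟩

lemma backward {G : SimpleGraph V} {u v : V} (huv : G.Adj u v)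
    (htwo : ∃ e f : Sym2 V, e ∈ G.edgeSet ∧ f ∈ G.edgeSet ∧ e ≠ f)
    (hN : ∀ a, G.Adj u a → a = v ∨ G.Adj v a) :
    IsSplitting (edgeIdeal k G) (Ideal.span {(X u * X v : MvPolynomial V k)})
      (edgeIdeal k (G.deleteEdges {s(u, v)})) := by
  classical
  refine ⟨?_, ?_, ?_, ?_, ?_, ?_, ?_, ?_⟩
  · exact ⟨{X u * X v}, by rintro m rfl; exact ⟨_, X_mul_X u v⟩, rfl⟩
  · exact ⟨{m | ∃ x y, (G.deleteEdges {s(u, v)}).Adj x y ∧ m = X x * X y},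
      by rintro m ⟨x, y, h, rfl⟩; exact ⟨_, X_mul_X x y⟩, rfl⟩
  · intro h
    rw [Ideal.span_singleton_eq_bot, X_mul_X, monomial_eq_zero] at h
    exact one_ne_zero h
  · obtain ⟨x, y, hd⟩ := exists_edge_del (u := u) (v := v) htwo
    intro h
    have hmem : (X x * X y : MvPolynomial V k) ∈ edgeIdeal k (G.deleteEdges {s(u, v)}) :=
      Ideal.subset_span ⟨x, y, hd, rfl⟩
    rw [h, Ideal.mem_bot, X_mul_X, monomial_eq_zero] at hmem
    exact one_ne_zero hmem
  · show edgeIdeal k G = _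
    unfold edgeIdeal
    rw [gen_sets_eq huv, Ideal.span_union]
    exact (Ideal.add_eq_sup).symm
  · rw [minGens_edgeIdeal, minGens_J huv.ne, minGens_edgeIdeal]
    exact gen_sets_eq huv
  · rw [minGens_J huv.ne, minGens_edgeIdeal, Set.disjoint_left]
    rintro m hm1 ⟨x, y, hxy, rfl⟩
    rw [Set.mem_singleton_iff] at hm1
    have hm' : (monomial (pr x y) (1:k)) = monomial (pr u v) 1 := by
      rw [← X_mul_X, ← X_mul_X]; exact hm1
    have heq : pr x y = pr u v := mono_inj hm'
    exact (SimpleGraph.deleteEdges_adj.mp hxy).2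
      (by simpa using pr_eq_sym2 hxy.ne huv.ne heq)
  · refine ⟨fun _ => X u * X v,
      fun w => if h : ∃ m, m ∈ minGens (edgeIdeal k (G.deleteEdges {s(u, v)})) ∧ IsLcmOf {(X u * X v : MvPolynomial V k), m} w ∧
        ∃ x y, x ≠ u ∧ y ≠ u ∧ m = monomial (pr x y) 1 then h.choose else 1, ?_, ?_⟩
    · intro w hw
      have hex := psi_exists huv hN hw
      beta_reduce
      rw [dif_pos hex]
      refine ⟨by rw [minGens_J huv.ne]; rfl, hex.choose_spec.1, hex.choose_spec.2.1⟩
    · intro S hSsub hSne L Lφ Lψ hL hLφ hLψ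
      obtain ⟨w0, hw0⟩ := hSne
      -- facts about ψ on S
      have hP : ∀ w ∈ S, (if h : ∃ m, m ∈ minGens (edgeIdeal k (G.deleteEdges {s(u, v)})) ∧
          IsLcmOf {(X u * X v : MvPolynomial V k), m} w ∧
          ∃ x y, x ≠ u ∧ y ≠ u ∧ m = monomial (pr x y) 1 then h.choose else 1) ∈ minGens (edgeIdeal k (G.deleteEdges {s(u, v)})) ∧
          IsLcmOf {(X u * X v : MvPolynomial V k),
            (if h : ∃ m, m ∈ minGens (edgeIdeal k (G.deleteEdges {s(u, v)})) ∧
          IsLcmOf {(X u * X v : MvPolynomial V k), m} w ∧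
          ∃ x y, x ≠ u ∧ y ≠ u ∧ m = monomial (pr x y) 1 then h.choose else 1)} w ∧
          ∃ x y, x ≠ u ∧ y ≠ u ∧ (if h : ∃ m, m ∈ minGens (edgeIdeal k (G.deleteEdges {s(u, v)})) ∧
          IsLcmOf {(X u * X v : MvPolynomial V k), m} w ∧
          ∃ x y, x ≠ u ∧ y ≠ u ∧ m = monomial (pr x y) 1 then h.choose else 1) = monomial (pr x y) 1 := by
        intro w hw
        have hex := psi_exists huv hN (hSsub hw)
        beta_reduce
        rw [dif_pos hex]
        exact hex.choose_spec
      obtain ⟨tL, rfl⟩ := hL.1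
      have hw0' := minGens_inf_shape huv (hSsub hw0)
      obtain ⟨x0, y0, hadj0, hw0eq⟩ := hw0'
      have h0le : pr u v ⊔ pr x0 y0 ≤ tL := mdvd.mp (hw0eq ▸ hL.2.1 _ hw0)
      have huvL : pr u v ≤ tL := le_trans le_sup_left h0le
      have hLφeq : Lφ = X u * X v := by
        rw [Set.Nonempty.image_const ⟨w0, hw0⟩] at hLφ
        have h0 : IsLcmOf {(X u * X v : MvPolynomial V k)} (X u * X v) := by
          rw [X_mul_X]; exact isLcm_single _
        exact lcm_unique hLφ h0
      have hψdvd : ∀ m' ∈ (fun w => if h : ∃ m, m ∈ minGens (edgeIdeal k (G.deleteEdges {s(u, v)})) ∧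
          IsLcmOf {(X u * X v : MvPolynomial V k), m} w ∧
          ∃ x y, x ≠ u ∧ y ≠ u ∧ m = monomial (pr x y) 1 then h.choose else 1) '' S,
          m' ∣ monomial tL 1 := by
        rintro m' ⟨w, hwS, rfl⟩
        exact dvd_trans ((hP w hwS).2.1.2.1 _ (Set.mem_insert_of_mem _ rfl)) (hL.2.1 w hwS)
      constructor
      · constructor
        · rw [hLφeq, X_mul_X]; exact mdvd.mpr huvL
        · rw [hLφeq, X_mul_X]
          intro h
          have htL : pr u v = tL := mono_inj h
          have hle2 : pr x0 y0 ≤ pr u v := htL ▸ le_trans le_sup_right h0le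
          have := pr_eq_sym2 hadj0.ne huv.ne (pr_le_pr hadj0.ne huv.ne hle2)
          exact (SimpleGraph.deleteEdges_adj.mp hadj0).2 (by simpa using this)
      · constructor
        · exact hLψ.2.2 _ ⟨_, rfl⟩ hψdvd
        · obtain ⟨tψ, rfl⟩ := hLψ.1
          have hψerase : ∀ m' ∈ (fun w => if h : ∃ m, m ∈ minGens (edgeIdeal k (G.deleteEdges {s(u, v)})) ∧
              IsLcmOf {(X u * X v : MvPolynomial V k), m} w ∧
              ∃ x y, x ≠ u ∧ y ≠ u ∧ m = monomial (pr x y) 1 then h.choose else 1) '' S,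
              m' ∣ monomial (tL.erase u) 1 := by
            rintro m' ⟨w, hwS, rfl⟩
            beta_reduce
            obtain ⟨x, y, hxu, hyu, hm⟩ := (hP w hwS).2.2
            rw [hm]
            have h1 : pr x y ≤ tL := by
              have hd := hψdvd _ ⟨w, hwS, rfl⟩
              beta_reduce at hd
              rw [hm] at hd
              exact mdvd.mp hd
            refine mdvd.mpr fun z => ?_
            by_cases hz : z = u
            · subst hz; rw [pr_o hxu hyu, Finsupp.erase_same]
            · rw [Finsupp.erase_ne hz]; exact h1 z
          have h2 : tψ ≤ tL.erase u := mdvd.mp (hLψ.2.2 _ ⟨_, rfl⟩ hψerase)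
          intro heq
          have h3 : tψ = tL := mono_inj heq
          have h4 : tψ u ≤ 0 := by
            have := h2 u; rwa [Finsupp.erase_same] at this
          have h5 : 1 ≤ tL u := by
            have := huvL u; rwa [pr_x huv.ne] at this
          rw [h3] at h4
          omega

lemma edge_in_tri {G : SimpleGraph V} {u v a x y : V} (huv : u ≠ v) (hua : G.Adj u a)
    (hav : ¬ G.Adj v a) (hane : a ≠ v)
    (hGxy : G.Adj x y) (hsxy : s(x, y) ≠ s(u, v)) (hle : pr x y ≤ pr u v ⊔ pr u a) :
    pr x y = pr u a := by
  have hmem : ∀ z, 1 ≤ pr x y z → z = u ∨ z = v ∨ z = a := by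
    intro z hz
    by_contra hc
    push_neg at hc
    have h0 : (pr u v ⊔ pr u a) z = 0 := by
      rw [Finsupp.sup_apply, pr_o (fun h => hc.1 h.symm) (fun h => hc.2.1 h.symm),
        pr_o (fun h => hc.1 h.symm) (fun h => hc.2.2 h.symm)]
      rfl
    have := hle z
    omega
  have hx : x = u ∨ x = v ∨ x = a := hmem x (by rw [pr_x hGxy.ne])
  have hy : y = u ∨ y = v ∨ y = a := hmem y (by rw [pr_y hGxy.ne])
  rcases hx with rfl | rfl | rfl <;> rcases hy with rfl | rfl | rfl
  · exact absurd rfl hGxy.ne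
  · exact absurd rfl hsxy
  · rfl
  · exact absurd Sym2.eq_swap hsxy
  · exact absurd rfl hGxy.ne
  · exact absurd hGxy hav
  · exact pr_comm _ _
  · exact absurd hGxy.symm hav
  · exact absurd rfl hGxy.ne

lemma w_mem {G : SimpleGraph V} {u v a : V} (huv : G.Adj u v) (hua : G.Adj u a)
    (hav : ¬ G.Adj v a) (hane : a ≠ v) :
    (monomial (pr u v ⊔ pr u a) 1 : MvPolynomial V k) ∈
      minGens ((Ideal.span {(X u * X v : MvPolynomial V k)}) ⊓
        edgeIdeal k (G.deleteEdges {s(u, v)})) := by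
  have hDua : (G.deleteEdges {s(u, v)}).Adj u a := by
    rw [SimpleGraph.deleteEdges_adj]
    refine ⟨hua, ?_⟩
    simp only [Set.mem_singleton_iff]
    intro h
    rw [Sym2.eq_iff] at h
    rcases h with ⟨_, h2⟩ | ⟨h1, _⟩
    · exact hane h2
    · exact huv.ne h1
  refine ⟨⟨_, rfl⟩, ?_, ?_⟩
  · rw [Submodule.mem_inf]
    constructor
    · exact (mem_J huv.ne).mpr ((pr_le_iff huv.ne).mp le_sup_left)
    · exact mem_edgeIdeal.mpr ⟨u, a, hDua, ((pr_le_iff hua.ne).mp le_sup_right).1,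
        ((pr_le_iff hua.ne).mp le_sup_right).2⟩
  · rintro m' ⟨r, rfl⟩ hdvd hne hin
    rw [Submodule.mem_inf] at hin
    obtain ⟨hJ, hK⟩ := hin
    have h1 : pr u v ≤ r := (pr_le_iff huv.ne).mpr ((mem_J huv.ne).mp hJ)
    obtain ⟨x, y, hxy, hx1, hy1⟩ := mem_edgeIdeal.mp hK
    have hrle : r ≤ pr u v ⊔ pr u a := mdvd.mp hdvd
    obtain ⟨hGxy, hsxy⟩ := SimpleGraph.deleteEdges_adj.mp hxy
    have hsxy' : s(x, y) ≠ s(u, v) := by simpa using hsxy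
    have h2 : pr x y = pr u a := edge_in_tri huv.ne hua hav hane hGxy hsxy'
      (le_trans ((pr_le_iff hGxy.ne).mpr ⟨hx1, hy1⟩) hrle)
    have h3 : pr u v ⊔ pr u a ≤ r := sup_le h1 (h2 ▸ (pr_le_iff hGxy.ne).mpr ⟨hx1, hy1⟩)
    exact hne (by rw [le_antisymm hrle h3])

lemma forward {G : SimpleGraph V} {u v : V} (huv : G.Adj u v)
    (hsplit : IsSplitting (edgeIdeal k G) (Ideal.span {(X u * X v : MvPolynomial V k)})
      (edgeIdeal k (G.deleteEdges {s(u, v)}))) :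
    (∀ a, G.Adj u a → a = v ∨ G.Adj v a) ∨ (∀ b, G.Adj v b → b = u ∨ G.Adj u b) := by
  by_contra hc
  push_neg at hc
  obtain ⟨⟨a, hua, hav, hvna⟩, ⟨b, hvb, hbu, hunb⟩⟩ := hc
  have hab : a ≠ b := by rintro rfl; exact hvna hvb
  obtain ⟨_, _, _, _, _, _, _, φ, ψ, hcA, hcB⟩ := hsplit
  have hw1 := w_mem (k := k) huv hua hvna hav
  have hswap : (Ideal.span {(X v * X u : MvPolynomial V k)}) ⊓
      edgeIdeal k (G.deleteEdges {s(v, u)}) =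
      (Ideal.span {(X u * X v : MvPolynomial V k)}) ⊓
        edgeIdeal k (G.deleteEdges {s(u, v)}) := by
    rw [mul_comm (X v) (X u), Sym2.eq_swap (a := v) (b := u)]
  have hw2 := w_mem (k := k) huv.symm hvb hunb hbu
  rw [hswap] at hw2
  obtain ⟨hφ1, hψ1, hlcm1⟩ := hcA _ hw1
  obtain ⟨hφ2, hψ2, hlcm2⟩ := hcA _ hw2
  rw [minGens_J huv.ne, Set.mem_singleton_iff] at hφ1 hφ2
  rw [minGens_edgeIdeal] at hψ1 hψ2
  obtain ⟨x1, y1, hxy1, hm1⟩ := hψ1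
  obtain ⟨x2, y2, hxy2, hm2⟩ := hψ2
  obtain ⟨hGxy1, hsxy1⟩ := SimpleGraph.deleteEdges_adj.mp hxy1
  obtain ⟨hGxy2, hsxy2⟩ := SimpleGraph.deleteEdges_adj.mp hxy2
  have hsxy1' : s(x1, y1) ≠ s(u, v) := by simpa using hsxy1
  have hsxy2' : s(x2, y2) ≠ s(u, v) := by simpa using hsxy2
  -- pin down ψ w1 and ψ w2
  have hd1 : pr x1 y1 ≤ pr u v ⊔ pr u a := by
    have := hlcm1.2.1 _ (Set.mem_insert_of_mem _ rfl)
    rw [hm1, X_mul_X] at this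
    exact mdvd.mp this
  have hd2 : pr x2 y2 ≤ pr v u ⊔ pr v b := by
    have := hlcm2.2.1 _ (Set.mem_insert_of_mem _ rfl)
    rw [hm2, X_mul_X] at this
    exact mdvd.mp this
  have he1 : pr x1 y1 = pr u a := edge_in_tri huv.ne hua hvna hav hGxy1 hsxy1' hd1
  have he2 : pr x2 y2 = pr v b := edge_in_tri huv.ne.symm hvb hunb hbu hGxy2
    (fun h => hsxy2' (h.trans (Sym2.eq_swap))) hd2
  have hψ1eq : ψ ((monomial (pr u v ⊔ pr u a)) 1) = monomial (pr u a) 1 := by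
    rw [hm1, X_mul_X, he1]
  have hψ2eq : ψ ((monomial (pr v u ⊔ pr v b)) 1) = monomial (pr v b) 1 := by
    rw [hm2, X_mul_X, he2]
  -- apply the splitting condition (b)
  have hsub : {(monomial (pr u v ⊔ pr u a) 1 : MvPolynomial V k),
      monomial (pr v u ⊔ pr v b) 1} ⊆
      minGens ((Ideal.span {(X u * X v : MvPolynomial V k)}) ⊓
        edgeIdeal k (G.deleteEdges {s(u, v)})) :=
    Set.insert_subset_iff.mpr ⟨hw1, Set.singleton_subset_iff.mpr hw2⟩
  have hLφ : IsLcmOf (φ '' {(monomial (pr u v ⊔ pr u a) 1 : MvPolynomial V k),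
      monomial (pr v u ⊔ pr v b) 1}) (X u * X v) := by
    rw [Set.image_pair, hφ1, hφ2, Set.pair_eq_singleton, X_mul_X]
    exact isLcm_single _
  have hLψ : IsLcmOf (ψ '' {(monomial (pr u v ⊔ pr u a) 1 : MvPolynomial V k),
      monomial (pr v u ⊔ pr v b) 1}) (monomial (pr u a ⊔ pr v b) 1) := by
    rw [Set.image_pair, hψ1eq, hψ2eq]
    exact isLcm_pair _ _
  have hres := hcB _ hsub ⟨_, Set.mem_insert _ _⟩ _ _ _
    (isLcm_pair (pr u v ⊔ pr u a) (pr v u ⊔ pr v b)) hLφ hLψ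
  apply hres.2.2
  have h1 : u ≠ v := huv.ne
  have h2 : u ≠ a := hua.ne
  have h3 : v ≠ b := hvb.ne
  have hsupeq : pr u a ⊔ pr v b = (pr u v ⊔ pr u a) ⊔ (pr v u ⊔ pr v b) := by
    ext z
    simp only [Finsupp.sup_apply, pr_apply]
    split_ifs <;> first | omega | simp_all | decide
  rw [hsupeq]

end Aux

/-- if `G` has at least two edges, then an edge `e = uv` of `G` is a
splitting edge of `G` if and only if `N(u) ⊆ N(v) ∪ {v}` or `N(v) ⊆ N(u) ∪ {u}`. -/
theorem stmt2 (k : Type*) [Field k] [Fintype V] [DecidableEq V]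
    (G : SimpleGraph V) (u v : V) (huv : G.Adj u v)
    (htwo : ∃ e f : Sym2 V, e ∈ G.edgeSet ∧ f ∈ G.edgeSet ∧ e ≠ f) :
    IsSplitting (edgeIdeal k G)
        (Ideal.span {(X u * X v : MvPolynomial V k)})
        (edgeIdeal k (G.deleteEdges {s(u, v)})) ↔
      (G.neighborSet u ⊆ insert v (G.neighborSet v) ∨
        G.neighborSet v ⊆ insert u (G.neighborSet u)) := by
  constructor
  · intro hsplit
    rcases forward huv hsplit with h | h
    · left
      intro a ha
      rw [SimpleGraph.mem_neighborSet] at ha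
      rcases h a ha with rfl | h2
      · exact Set.mem_insert _ _
      · exact Set.mem_insert_of_mem _ (by rwa [SimpleGraph.mem_neighborSet])
    · right
      intro b hb
      rw [SimpleGraph.mem_neighborSet] at hb
      rcases h b hb with rfl | h2
      · exact Set.mem_insert _ _
      · exact Set.mem_insert_of_mem _ (by rwa [SimpleGraph.mem_neighborSet])
  · rintro (h | h)
    · refine backward huv htwo fun a ha => ?_
      have := h (by rwa [SimpleGraph.mem_neighborSet])
      rw [Set.mem_insert_iff, SimpleGraph.mem_neighborSet] at this
      exact this
    · have hN : ∀ b, G.Adj v b → b = u ∨ G.Adj u b := fun b hb => by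
        have := h (by rwa [SimpleGraph.mem_neighborSet])
        rw [Set.mem_insert_iff, SimpleGraph.mem_neighborSet] at this
        exact this
      have hb := backward (k := k) huv.symm htwo hN
      rwa [mul_comm (X v) (X u), Sym2.eq_swap (a := v) (b := u)] at hb
end

section
/- Let Δ be a simplicial complex, F a facet of Δ, Δ' = Δ∖F, and Ω = Δ∖conn_Δ(F) the subcomplex whose facets are the facets of Δ not connected to F. Then (F) ∩ I(Δ') = (F)·(I(conn̄_Δ(F)) + I(Ω)), where (F) is the principal ideal generated by the monomial ∏_{x∈F} x. -/
open MvPolynomial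

variable {V : Type*}

/-- Two facets `F`, `G` of the complex with facet set `Δ` are connected if
there is a chain of facets `F = F₀, F₁, …, F_m = G` of `Δ` with
`Fᵢ ∩ Fᵢ₊₁ ≠ ∅` for all `i`. -/
def FacetConn [DecidableEq V] (Δ : Set (Finset V)) (F G : Finset V) : Prop :=
  F ∈ Δ ∧ Relation.ReflTransGen
    (fun A B => A ∈ Δ ∧ B ∈ Δ ∧ (A ∩ B).Nonempty) F G

/-- `connComp Δ F` is the connected component of `F` in `Δ`: the subcomplex
whose facets are the facets of `Δ` connected to `F`. -/
def connComp [DecidableEq V] (Δ : Set (Finset V)) (F : Finset V) :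
    Set (Finset V) :=
  {G | G ∈ Δ ∧ FacetConn Δ F G}

/-- The reduced connected component `conn̄_Δ(F)`: the facets are the sets
`G \ F` (for `G ≠ F` a facet of `conn_Δ(F)`) that are minimal under inclusion
among all such sets. -/
def reducedConn [DecidableEq V] (Δ : Set (Finset V)) (F : Finset V) :
    Set (Finset V) :=
  {H | ∃ G ∈ connComp Δ F, G ≠ F ∧ H = G \ F ∧
    ∀ G' ∈ connComp Δ F, G' ≠ F → G' \ F ⊆ G \ F → G' \ F = G \ F}

/-- The facet ideal of the simplicial complex with facet set `Δ`: it is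
generated by the monomials `∏_{x ∈ F} x` over the facets `F` of `Δ`. -/
noncomputable def facetIdeal (k : Type*) [Field k] [DecidableEq V]
    (Δ : Set (Finset V)) : Ideal (MvPolynomial V k) :=
  Ideal.span ((fun F : Finset V => ∏ x ∈ F, X x) '' Δ)

noncomputable def eFn [DecidableEq V] (F : Finset V) : V →₀ ℕ :=
  ∑ x ∈ F, Finsupp.single x 1

lemma eFn_apply [DecidableEq V] (F : Finset V) (y : V) :
    eFn F y = if y ∈ F then 1 else 0 := by
  classical
  simp [eFn, Finsupp.finset_sum_apply, Finsupp.single_apply,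
    Finset.sum_ite_eq' F y (fun _ => 1)]

lemma prodX_eq_monomial (k : Type*) [CommSemiring k] [DecidableEq V] (F : Finset V) :
    (∏ x ∈ F, X x : MvPolynomial V k) = monomial (eFn F) 1 := by
  classical
  induction F using Finset.induction_on with
  | empty => simp [eFn]
  | insert _ _ h ih =>
    rw [Finset.prod_insert h, ih, X, monomial_mul, one_mul]
    congr 1
    simp [eFn, Finset.sum_insert h]

lemma eFn_le_iff [DecidableEq V] (F : Finset V) (m : V →₀ ℕ) :
    eFn F ≤ m ↔ ∀ x ∈ F, 1 ≤ m x := by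
  rw [Finsupp.le_def]
  constructor
  · intro h x hx
    have := h x
    rwa [eFn_apply, if_pos hx] at this
  · intro h x
    rw [eFn_apply]
    split
    · exact h x ‹_›
    · exact Nat.zero_le _

lemma facetIdeal_eq (k : Type*) [Field k] [DecidableEq V] (Δ : Set (Finset V)) :
    facetIdeal k Δ = Ideal.span ((fun s => monomial s (1 : k)) '' (eFn '' Δ)) := by
  rw [facetIdeal, Set.image_image]
  congr 1
  exact Set.image_congr fun F _ => prodX_eq_monomial k F

/-- The key combinatorial equivalence on exponent vectors. -/
lemma key_iff [DecidableEq V] (Δ : Set (Finset V)) (F : Finset V) (hF : F ∈ Δ)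
    (m : V →₀ ℕ) :
    (eFn F ≤ m ∧ ∃ G ∈ Δ \ {F}, eFn G ≤ m) ↔
      ∃ H ∈ reducedConn Δ F ∪ (Δ \ connComp Δ F), eFn F + eFn H ≤ m := by
  constructor
  · rintro ⟨h1, G, ⟨hG, hGF⟩, h2⟩
    rw [Set.mem_singleton_iff] at hGF
    rw [eFn_le_iff] at h1 h2
    by_cases hc : G ∈ connComp Δ F
    · -- minimal card argument
      set T : Set ℕ := {n | ∃ G' ∈ connComp Δ F, G' ≠ F ∧ G' \ F ⊆ G \ F ∧ (G' \ F).card = n}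
        with hT
      have hTne : T.Nonempty := ⟨(G \ F).card, G, hc, hGF, subset_rfl, rfl⟩
      obtain ⟨G₀, hG₀c, hG₀F, hG₀sub, hG₀card⟩ := Nat.sInf_mem hTne
      refine ⟨G₀ \ F, Or.inl ⟨G₀, hG₀c, hG₀F, rfl, ?_⟩, ?_⟩
      · intro G' hG' hG'F hsub
        have hmem : (G' \ F).card ∈ T := ⟨G', hG', hG'F, hsub.trans hG₀sub, rfl⟩
        have := Nat.sInf_le hmem
        rw [← hG₀card] at this
        exact Finset.eq_of_subset_of_card_le hsub this
      · rw [Finsupp.le_def]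
        intro x
        rw [Finsupp.add_apply, eFn_apply, eFn_apply]
        by_cases hxF : x ∈ F
        · have hxG0 : x ∉ G₀ \ F := fun h => (Finset.mem_sdiff.mp h).2 hxF
          rw [if_pos hxF, if_neg hxG0]
          exact h1 x hxF
        · rw [if_neg hxF]
          by_cases hxG0 : x ∈ G₀ \ F
          · rw [if_pos hxG0]
            have : x ∈ G := Finset.mem_sdiff.mp (hG₀sub hxG0) |>.1
            simpa using h2 x this
          · rw [if_neg hxG0]; exact Nat.zero_le _
    · -- G not connected to F: G ∩ F = ∅
      have hdisj : ∀ x, x ∈ F → x ∉ G := by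
        intro x hxF hxG
        exact hc ⟨hG, hF, Relation.ReflTransGen.single
          ⟨hF, hG, ⟨x, Finset.mem_inter.mpr ⟨hxF, hxG⟩⟩⟩⟩
      refine ⟨G, Or.inr ⟨hG, hc⟩, ?_⟩
      rw [Finsupp.le_def]
      intro x
      rw [Finsupp.add_apply, eFn_apply, eFn_apply]
      by_cases hxF : x ∈ F
      · rw [if_pos hxF, if_neg (hdisj x hxF)]
        exact h1 x hxF
      · rw [if_neg hxF]
        by_cases hxG : x ∈ G
        · rw [if_pos hxG]; simpa using h2 x hxG
        · rw [if_neg hxG]; exact Nat.zero_le _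
  · rintro ⟨H, hH, hle⟩
    have hFle : eFn F ≤ m := le_trans (self_le_add_right _ _) hle
    refine ⟨hFle, ?_⟩
    rcases hH with hrc | ⟨hHΔ, hHc⟩
    · obtain ⟨G₀, hG₀c, hG₀F, rfl, -⟩ := hrc
      refine ⟨G₀, ⟨hG₀c.1, hG₀F⟩, le_trans ?_ hle⟩
      rw [Finsupp.le_def]
      intro x
      rw [Finsupp.add_apply, eFn_apply, eFn_apply, eFn_apply]
      by_cases hxG : x ∈ G₀
      · rw [if_pos hxG]
        by_cases hxF : x ∈ F
        · rw [if_pos hxF]; omega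
        · rw [if_pos (Finset.mem_sdiff.mpr ⟨hxG, hxF⟩)]; omega
      · rw [if_neg hxG]; exact Nat.zero_le _
    · have hHF : H ≠ F := by
        rintro rfl
        exact hHc ⟨hF, hF, Relation.ReflTransGen.refl⟩
      exact ⟨H, ⟨hHΔ, hHF⟩, le_trans (self_le_add_left _ _) hle⟩

/-- for a facet `F` of a simplicial complex `Δ`, with
`Δ' = Δ \ F` and `Ω = Δ \ conn_Δ(F)`, one has
`(F) ∩ I(Δ') = (F) · (I(conn̄_Δ(F)) + I(Ω))`. -/
theorem stmt9 (k : Type*) [Field k] [Fintype V] [DecidableEq V]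
    (Δ : Set (Finset V)) (hne : ∀ F ∈ Δ, F.Nonempty)
    (hac : IsAntichain (· ⊆ ·) Δ) (F : Finset V) (hF : F ∈ Δ) :
    Ideal.span {(∏ x ∈ F, X x : MvPolynomial V k)} ⊓ facetIdeal k (Δ \ {F}) =
      Ideal.span {(∏ x ∈ F, X x : MvPolynomial V k)} *
        (facetIdeal k (reducedConn Δ F) + facetIdeal k (Δ \ connComp Δ F)) := by
  classical
  -- rewrite the sum of facet ideals as one facet ideal
  have hsum : facetIdeal k (reducedConn Δ F) + facetIdeal k (Δ \ connComp Δ F)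
      = facetIdeal k (reducedConn Δ F ∪ (Δ \ connComp Δ F)) := by
    rw [facetIdeal, facetIdeal, facetIdeal, Set.image_union, Ideal.span_union]
    rfl
  rw [hsum]
  -- rewrite everything as spans of monomial images
  rw [prodX_eq_monomial k F, facetIdeal_eq, facetIdeal_eq]
  have hsingle : (Ideal.span {(monomial (eFn F) (1 : k))} : Ideal (MvPolynomial V k))
      = Ideal.span ((fun s => monomial s (1 : k)) '' {eFn F}) := by
    rw [Set.image_singleton]
  rw [hsingle]
  have hprod : Ideal.span ((fun s => monomial s (1 : k)) '' {eFn F}) *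
      Ideal.span ((fun s => monomial s (1 : k)) '' (eFn '' (reducedConn Δ F ∪ (Δ \ connComp Δ F))))
      = Ideal.span ((fun s => monomial s (1 : k)) ''
          ((fun t => eFn F + t) '' (eFn '' (reducedConn Δ F ∪ (Δ \ connComp Δ F))))) := by
    rw [Ideal.span_mul_span', Set.image_singleton, Set.singleton_mul]
    congr 1
    simp only [Set.image_image]
    apply Set.image_congr
    intro t _
    rw [monomial_mul, one_mul]
  rw [hprod]
  ext p
  rw [Submodule.mem_inf, mem_ideal_span_monomial_image, mem_ideal_span_monomial_image,
    mem_ideal_span_monomial_image]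
  constructor
  · rintro ⟨hp1, hp2⟩ xi hxi
    obtain ⟨s, hs, hsle⟩ := hp2 xi hxi
    obtain ⟨sF, hsF, hsFle⟩ := hp1 xi hxi
    rw [Set.mem_singleton_iff] at hsF
    subst hsF
    obtain ⟨G, hG, rfl⟩ := hs
    obtain ⟨H, hH, hle⟩ := (key_iff Δ F hF xi).mp ⟨hsFle, G, hG, hsle⟩
    exact ⟨eFn F + eFn H, ⟨eFn H, ⟨H, hH, rfl⟩, rfl⟩, hle⟩
  · intro hp
    constructor
    · intro xi hxi
      obtain ⟨u, ⟨t, ⟨H, hH, rfl⟩, rfl⟩, hle⟩ := hp xi hxi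
      obtain ⟨h1, -⟩ := (key_iff Δ F hF xi).mpr ⟨H, hH, hle⟩
      exact ⟨eFn F, rfl, h1⟩
    · intro xi hxi
      obtain ⟨u, ⟨t, ⟨H, hH, rfl⟩, rfl⟩, hle⟩ := hp xi hxi
      obtain ⟨-, G, hG, hGle⟩ := (key_iff Δ F hF xi).mpr ⟨H, hH, hle⟩
      exact ⟨eFn G, ⟨G, hG, rfl⟩, hGle⟩
end

section
/- Let Δ be a simplicial forest and let F be a facet of Δ. If the reduced connected component conn̄_Δ(F) has at least one facet, then conn̄_Δ(F) is a forest. -/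
variable {V : Type*}

/-- A complex is connected if any two of its facets are connected. -/
def IsConnComplex [DecidableEq V] (Δ : Set (Finset V)) : Prop :=
  ∀ F ∈ Δ, ∀ G ∈ Δ, FacetConn Δ F G

/-- A facet `F` of `Δ` is a leaf if either `F` is the only facet, or there is
a facet `G ≠ F` with `F ∩ F' ⊆ F ∩ G` for every facet `F' ≠ F`. -/
def IsLeaf [DecidableEq V] (Δ : Set (Finset V)) (F : Finset V) : Prop :=
  F ∈ Δ ∧ (Δ = {F} ∨ ∃ G ∈ Δ, G ≠ F ∧ ∀ F' ∈ Δ, F' ≠ F → F ∩ F' ⊆ F ∩ G)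

/-- `Δ` is a tree if it is connected and every nonempty connected subcomplex
of `Δ` (including `Δ` itself) has a leaf. -/
def IsTreeComplex [DecidableEq V] (Δ : Set (Finset V)) : Prop :=
  IsConnComplex Δ ∧
    ∀ Δ' ⊆ Δ, Δ'.Nonempty → IsConnComplex Δ' → ∃ F, IsLeaf Δ' F

/-- `Δ` is a forest if every connected component of `Δ` is a tree. -/
def IsForestComplex [DecidableEq V] (Δ : Set (Finset V)) : Prop :=
  ∀ F ∈ Δ, IsTreeComplex (connComp Δ F)

lemma rtg_mem_aux [DecidableEq V] {Δ : Set (Finset V)} {F G : Finset V} (hF : F ∈ Δ)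
    (h : Relation.ReflTransGen (fun A B => A ∈ Δ ∧ B ∈ Δ ∧ (A ∩ B).Nonempty) F G) :
    G ∈ Δ := by
  induction h with
  | refl => exact hF
  | tail _ hbc _ => exact hbc.2.1

lemma rtg_lift_aux [DecidableEq V] {Δ : Set (Finset V)} {F G : Finset V} (hF : F ∈ Δ)
    (h : Relation.ReflTransGen (fun A B => A ∈ Δ ∧ B ∈ Δ ∧ (A ∩ B).Nonempty) F G) :
    Relation.ReflTransGen
      (fun A B => A ∈ connComp Δ F ∧ B ∈ connComp Δ F ∧ (A ∩ B).Nonempty) F G := by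
  induction h with
  | refl => exact .refl
  | tail hb hbc ih =>
      exact ih.tail ⟨⟨hbc.1, hF, hb⟩, ⟨hbc.2.1, hF, hb.tail hbc⟩, hbc.2.2⟩

lemma connComp_symm_aux [DecidableEq V] (Δ' : Set (Finset V)) :
    Symmetric (fun A B : Finset V => A ∈ Δ' ∧ B ∈ Δ' ∧ (A ∩ B).Nonempty) :=
  fun _ _ h => ⟨h.2.1, h.1, by rw [Finset.inter_comm]; exact h.2.2⟩

lemma connComp_isConn_aux [DecidableEq V] (Δ : Set (Finset V)) (F : Finset V) :
    IsConnComplex (connComp Δ F) := by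
  intro G hG G' hG'
  refine ⟨hG, ?_⟩
  have h1 := rtg_lift_aux hG.2.1 hG.2.2
  have h2 := rtg_lift_aux hG'.2.1 hG'.2.2
  exact ((@Relation.ReflTransGen.stdSymm _ _ ⟨connComp_symm_aux _⟩).symm _ _ h1).trans h2

/-- if `Δ` is a simplicial forest and `F` is a facet of `Δ` whose
reduced connected component `conn̄_Δ(F)` has at least one facet, then
`conn̄_Δ(F)` is a forest. -/
theorem stmt11 [Fintype V] [DecidableEq V] (Δ : Set (Finset V))
    (hne : ∀ F ∈ Δ, F.Nonempty) (hac : IsAntichain (· ⊆ ·) Δ)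
    (hforest : IsForestComplex Δ) (F : Finset V) (hF : F ∈ Δ)
    (hrc : (reducedConn Δ F).Nonempty) :
    IsForestComplex (reducedConn Δ F) := by
  -- choose a representative facet `rep H` of `connComp Δ F` for each facet
  -- `H = rep H \ F` of the reduced connected component
  have hrepex : ∀ H : Finset V, ∃ G, H ∈ reducedConn Δ F →
      (G ∈ connComp Δ F ∧ G ≠ F ∧ H = G \ F) := by
    intro H
    by_cases hH : H ∈ reducedConn Δ F
    · obtain ⟨G, hG, hne', hHG, _⟩ := hH
      exact ⟨G, fun _ => ⟨hG, hne', hHG⟩⟩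
    · exact ⟨∅, fun h => absurd h hH⟩
  choose rep hrep using hrepex
  intro H₀ hH₀
  refine ⟨connComp_isConn_aux _ _, ?_⟩
  intro Γ' hΓ'sub hΓ'ne hΓ'conn
  -- Γ' is a subset of the reduced connected component
  have hΓ'red : Γ' ⊆ reducedConn Δ F := fun H hH => (hΓ'sub hH).1
  -- properties of representatives of facets of Γ'
  have hrep1 : ∀ H ∈ Γ', rep H ∈ connComp Δ F := fun H hH => (hrep H (hΓ'red hH)).1
  have hrep2 : ∀ H ∈ Γ', rep H ≠ F := fun H hH => (hrep H (hΓ'red hH)).2.1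
  have hrep3 : ∀ H ∈ Γ', rep H \ F = H := fun H hH => ((hrep H (hΓ'red hH)).2.2).symm
  -- the subcomplex of representatives
  set Δ' : Set (Finset V) := rep '' Γ' with hΔ'def
  have hΔ'sub : Δ' ⊆ connComp Δ F := by
    rintro G ⟨H, hH, rfl⟩; exact hrep1 H hH
  have hΔ'ne : Δ'.Nonempty := hΓ'ne.image rep
  -- Δ' is connected: lift chains from Γ'
  have hΔ'conn : IsConnComplex Δ' := by
    rintro G₁ ⟨H₁, hH₁, rfl⟩ G₂ ⟨H₂, hH₂, rfl⟩
    refine ⟨⟨H₁, hH₁, rfl⟩, ?_⟩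
    have hchain := (hΓ'conn H₁ hH₁ H₂ hH₂).2
    clear hH₂
    induction hchain with
    | refl => exact .refl
    | @tail b c hb hbc ih =>
        refine ih.tail ⟨⟨b, hbc.1, rfl⟩, ⟨c, hbc.2.1, rfl⟩, ?_⟩
        obtain ⟨x, hx⟩ := hbc.2.2
        refine ⟨x, Finset.mem_inter.2 ⟨?_, ?_⟩⟩
        · have := hrep3 b hbc.1
          have hxb : x ∈ b := (Finset.mem_inter.1 hx).1
          rw [← this] at hxb
          exact (Finset.mem_sdiff.1 hxb).1
        · have := hrep3 c hbc.2.1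
          have hxc : x ∈ c := (Finset.mem_inter.1 hx).2
          rw [← this] at hxc
          exact (Finset.mem_sdiff.1 hxc).1
  -- apply the tree property of connComp Δ F
  obtain ⟨G, hGmem, hGleaf⟩ := (hforest F hF).2 Δ' hΔ'sub hΔ'ne hΔ'conn
  obtain ⟨H, hHΓ', rfl⟩ := hGmem
  refine ⟨H, hHΓ', ?_⟩
  -- rep is injective on Γ'
  have hinj : ∀ H₁ ∈ Γ', ∀ H₂ ∈ Γ', rep H₁ = rep H₂ → H₁ = H₂ := by
    intro H₁ h₁ H₂ h₂ he
    rw [← hrep3 H₁ h₁, ← hrep3 H₂ h₂, he]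
  rcases hGleaf with hsing | ⟨G', hG'mem, hG'ne, hGdom⟩
  · -- Δ' = {rep H}: then Γ' = {H}
    left
    apply Set.eq_singleton_iff_unique_mem.2
    refine ⟨hHΓ', fun H'' hH'' => ?_⟩
    have : rep H'' ∈ Δ' := ⟨H'', hH'', rfl⟩
    rw [hsing] at this
    exact hinj H'' hH'' H hHΓ' this
  · right
    obtain ⟨H', hH'Γ', rfl⟩ := hG'mem
    have hH'ne : H' ≠ H := fun he => hG'ne (by rw [he])
    refine ⟨H', hH'Γ', hH'ne, ?_⟩
    intro H'' hH''Γ' hH''ne x hx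
    have hxH : x ∈ H := (Finset.mem_inter.1 hx).1
    have hxH'' : x ∈ H'' := (Finset.mem_inter.1 hx).2
    have hxnF : x ∉ F := by
      rw [← hrep3 H hHΓ'] at hxH
      exact (Finset.mem_sdiff.1 hxH).2
    have hrepne : rep H'' ≠ rep H := fun he => hH''ne (hinj H'' hH''Γ' H hHΓ' he)
    have hsub := hGdom (rep H'') ⟨H'', hH''Γ', rfl⟩ hrepne
    have hxmem : x ∈ rep H ∩ rep H'' := by
      refine Finset.mem_inter.2 ⟨?_, ?_⟩
      · rw [← hrep3 H hHΓ'] at hxH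
        exact (Finset.mem_sdiff.1 hxH).1
      · rw [← hrep3 H'' hH''Γ'] at hxH''
        exact (Finset.mem_sdiff.1 hxH'').1
    have hx' := hsub hxmem
    have hxH' : x ∈ H' := by
      rw [← hrep3 H' hH'Γ']
      exact Finset.mem_sdiff.2 ⟨(Finset.mem_inter.1 hx').2, hxnF⟩
    exact Finset.mem_inter.2 ⟨hxH, hxH'⟩
end
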